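/- Let k be an algebraically closed field of characteristic p and q = p^e. Let Q_1, ..., Q_n ∈ k[X] all have degree λ with leading coefficients q_1, ..., q_n satisfying Δ_n(q_1,...,q_n) ≠ 0. Let P = Δ_n(Q_1,...,Q_n) and for each nonzero ε ∈ F_p^n let P_ε = Σ_i ε_i (-1)^{i-1} Δ_{n-1}(Q-hat_i), where Q-hat_i omits Q_i. Then: (1) deg P = (1 + p + ... + p^{n-1})λ; (2) deg P_ε = (1 + p + ... + p^{n-2})λ; and (3) P_ε divides P in k[X]. -/

import Mathlib

open Polynomial

set_option maxHeartbeats 1600000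
open Matrix

/-- The Moore matrix of an `n`-tuple `a` in a ring of characteristic `p`:
its `(i,j)` entry is `a j ^ p ^ i`. -/
def mooreMatrix {k : Type*} [CommRing k] (p : ℕ) {n : ℕ} (a : Fin n → k) :
    Matrix (Fin n) (Fin n) k :=
  Matrix.of fun i j => a j ^ p ^ (i : ℕ)

section Aux
variable {p : ℕ} [Fact p.Prime]

lemma chi_pow_pow {R : Type*} [CommRing R] [CharP R p] (c : ZMod p) (i : ℕ) :
    (ZMod.castHom (dvd_refl p) R c) ^ p ^ i = ZMod.castHom (dvd_refl p) R c := by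
  rw [← map_pow, ZMod.pow_card_pow]

lemma sum_chi_pow_pow {R : Type*} [CommRing R] [CharP R p] {m : ℕ}
    (c : Fin m → ZMod p) (S : Fin m → R) (i : ℕ) :
    (∑ l, ZMod.castHom (dvd_refl p) R (c l) * S l) ^ p ^ i
      = ∑ l, ZMod.castHom (dvd_refl p) R (c l) * S l ^ p ^ i := by
  rw [sum_pow_char_pow]
  exact Finset.sum_congr rfl fun l _ => by rw [mul_pow, chi_pow_pow]

lemma moore_mul_matrix {R : Type*} [CommRing R] [CharP R p] {m : ℕ}
    (S : Fin m → R) (A : Matrix (Fin m) (Fin m) (ZMod p)) :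
    mooreMatrix p (fun j => ∑ l, ZMod.castHom (dvd_refl p) R (A l j) * S l)
      = mooreMatrix p S * A.map (ZMod.castHom (dvd_refl p) R) := by
  ext i j
  rw [Matrix.mul_apply]
  simp only [mooreMatrix, Matrix.of_apply, Matrix.map_apply]
  rw [sum_chi_pow_pow]
  exact Finset.sum_congr rfl fun l _ => mul_comm _ _

lemma moore_col_ne_zero {K : Type*} [Field K] {m : ℕ} {r : Fin m → K}
    (hr : (mooreMatrix p r).det ≠ 0) (i : Fin m) : r i ≠ 0 := by
  intro h
  refine hr (Matrix.det_eq_zero_of_column_eq_zero i fun j => ?_)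
  simp [mooreMatrix, h, pow_eq_zero_iff, (Fact.out : p.Prime).ne_zero]

lemma aux_moore_deg {k : Type*} [Field k] {m l : ℕ} (R : Fin m → k[X]) (r : Fin m → k)
    (hdeg : ∀ i, (R i).natDegree = l) (hlead : ∀ i, (R i).leadingCoeff = r i)
    (hr : (mooreMatrix (k := k) p r).det ≠ 0) :
    (mooreMatrix p R).det.natDegree = (∑ i ∈ Finset.range m, p ^ i) * l ∧
      (mooreMatrix p R).det.leadingCoeff = (mooreMatrix p r).det := by
  have hri : ∀ i, r i ≠ 0 := moore_col_ne_zero hr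
  have hRi : ∀ i, R i ≠ 0 := fun i h => hri i (by rw [← hlead i, h, leadingCoeff_zero])
  set d := (∑ i ∈ Finset.range m, p ^ i) * l with hd
  have hterm : ∀ σ : Equiv.Perm (Fin m),
      (∏ i, mooreMatrix p R (σ i) i).natDegree = d ∧
      (∏ i, mooreMatrix p R (σ i) i).leadingCoeff = ∏ i, mooreMatrix p r (σ i) i := by
    intro σ
    have h1 : (∏ i, mooreMatrix p R (σ i) i) = ∏ i, R i ^ p ^ ((σ i : ℕ)) := rfl
    constructor
    · rw [h1, natDegree_prod _ _ (fun i _ => pow_ne_zero _ (hRi i))]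
      simp only [natDegree_pow, hdeg]
      rw [← Finset.sum_mul, hd]
      congr 1
      rw [Equiv.sum_comp σ (fun i : Fin m => p ^ (i : ℕ)), Fin.sum_univ_eq_sum_range]
    · rw [h1, leadingCoeff_prod]
      exact Finset.prod_congr rfl fun i _ => by
        simp [leadingCoeff_pow, hlead, mooreMatrix]
  have hcoeff : (mooreMatrix p R).det.coeff d = (mooreMatrix p r).det := by
    rw [Matrix.det_apply, Polynomial.finset_sum_coeff, Matrix.det_apply]
    refine Finset.sum_congr rfl fun σ _ => ?_
    rw [Polynomial.coeff_smul, ← (hterm σ).1, Polynomial.coeff_natDegree, (hterm σ).2]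
  have hle : (mooreMatrix p R).det.natDegree ≤ d := by
    rw [Matrix.det_apply]
    have hsmul : ∀ (u : ℤˣ) (f : k[X]), (u • f).natDegree = f.natDegree := by
      intro u f; rcases Int.units_eq_one_or u with rfl | rfl <;> simp
    refine Polynomial.natDegree_sum_le_of_forall_le _ _ fun σ _ => ?_
    exact le_of_eq ((hsmul _ _).trans (hterm σ).1)
  have hnd : (mooreMatrix p R).det.natDegree = d :=
    le_antisymm hle (le_natDegree_of_ne_zero (by rw [hcoeff]; exact hr))
  exact ⟨hnd, by rw [leadingCoeff, hnd, hcoeff]⟩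

lemma moore_det_snoc_eq {K : Type*} [Field K] [CharP K p]
    {m : ℕ} (R : Fin m → K)
    (hD : (mooreMatrix p R).det ≠ 0)
    (hind : ∀ c : Fin m → ZMod p,
      ∑ i, ZMod.castHom (dvd_refl p) K (c i) * R i = 0 → c = 0)
    (y : K) :
    (mooreMatrix p (Fin.snoc R y)).det
      = (mooreMatrix p R).det *
        ∏ c : Fin m → ZMod p, (y - ∑ i, ZMod.castHom (dvd_refl p) K (c i) * R i) := by
  classical
  have hp : p.Prime := Fact.out
  set χ := ZMod.castHom (dvd_refl p) K with hχ
  set s : (Fin m → ZMod p) → K := fun c => ∑ i, χ (c i) * R i with hs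
  set D := (mooreMatrix p R).det with hDdef
  set g : K[X] := (mooreMatrix p (Fin.snoc (fun i => C (R i)) (X : K[X]))).det with hg
  -- evaluation of g
  have heval : ∀ z : K, g.eval z = (mooreMatrix p (Fin.snoc R z)).det := by
    intro z
    rw [hg, ← Polynomial.coe_evalRingHom, RingHom.map_det]
    congr 1
    ext i j
    simp only [Matrix.map_apply, mooreMatrix, Matrix.of_apply, map_pow, coe_evalRingHom]
    congr 1
    refine Fin.lastCases ?_ (fun j' => ?_) j <;> simp
  -- expansion of g along the last column
  set d : Fin (m + 1) → K := fun i =>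
    (Matrix.of fun a b => R b ^ p ^ ((i.succAbove a : ℕ)) : Matrix (Fin m) (Fin m) K).det
    with hd
  have hgsum : g = ∑ i : Fin (m + 1), C ((-1) ^ ((i : ℕ) + m) * d i) * X ^ p ^ (i : ℕ) := by
    rw [hg, Matrix.det_succ_column _ (Fin.last m)]
    refine Finset.sum_congr rfl fun i _ => ?_
    have h1 : (mooreMatrix p (Fin.snoc (fun i => C (R i)) (X : K[X]))) i (Fin.last m)
        = X ^ p ^ (i : ℕ) := by simp [mooreMatrix]
    have h2 : ((mooreMatrix p (Fin.snoc (fun i => C (R i)) (X : K[X]))).submatrix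
          i.succAbove (Fin.last m).succAbove).det = C (d i) := by
      have : (mooreMatrix p (Fin.snoc (fun i => C (R i)) (X : K[X]))).submatrix
          i.succAbove (Fin.last m).succAbove
          = (Matrix.of fun a b => R b ^ p ^ ((i.succAbove a : ℕ))
              : Matrix (Fin m) (Fin m) K).map C := by
        ext a b
        simp [mooreMatrix, Fin.succAbove_last, map_pow]
      rw [this, ← RingHom.mapMatrix_apply, ← RingHom.map_det]
    rw [h1, h2]
    have h3 : C ((-1) ^ ((i : ℕ) + m) * d i)
        = (-1 : K[X]) ^ ((i : ℕ) + m) * C (d i) := by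
      rw [C_mul, C_pow, C_neg, C_1]
    rw [h3, Fin.val_last]
    ring
  -- coefficient at p^m
  have hcoefftop : g.coeff (p ^ m) = D := by
    rw [hgsum, Polynomial.finset_sum_coeff]
    rw [Finset.sum_eq_single (Fin.last m)]
    · rw [Polynomial.coeff_C_mul, Polynomial.coeff_X_pow, Fin.val_last,
        if_pos rfl, mul_one]
      have hM : (Matrix.of fun a b => R b ^ p ^ (((Fin.last m).succAbove a : ℕ))
          : Matrix (Fin m) (Fin m) K) = mooreMatrix p R := by
        ext a b
        simp [mooreMatrix, Fin.succAbove_last]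
      have hd2 : d (Fin.last m) = D := by
        simp only [hd, hDdef, hM]
      rw [hd2]
      have hev : Even (m + m) := ⟨m, rfl⟩
      rw [hev.neg_one_pow, one_mul]
    · intro i _ hi
      rw [Polynomial.coeff_C_mul, Polynomial.coeff_X_pow, if_neg, mul_zero]
      intro h
      exact hi (Fin.eq_of_val_eq (by
        have := Nat.pow_right_injective hp.two_le h
        simpa [Fin.val_last] using this.symm))
    · intro h; exact absurd (Finset.mem_univ _) h
  have hgle : g.natDegree ≤ p ^ m := by
    rw [hgsum]
    refine Polynomial.natDegree_sum_le_of_forall_le _ _ fun i _ => ?_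
    refine (Polynomial.natDegree_C_mul_le _ _).trans ?_
    rw [Polynomial.natDegree_X_pow]
    exact Nat.pow_le_pow_right hp.pos (Fin.is_le i)
  have hg0 : g ≠ 0 := fun h => hD (by rw [← hcoefftop, h, Polynomial.coeff_zero])
  have hgdeg : g.natDegree = p ^ m :=
    le_antisymm hgle (Polynomial.le_natDegree_of_ne_zero (by rw [hcoefftop]; exact hD))
  have hglead : g.leadingCoeff = D := by rw [Polynomial.leadingCoeff, hgdeg, hcoefftop]
  -- roots
  have hroot : ∀ c : Fin m → ZMod p, g.IsRoot (s c) := by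
    intro c
    rw [Polynomial.IsRoot, heval]
    rw [← Matrix.exists_mulVec_eq_zero_iff]
    refine ⟨Fin.snoc (fun i => χ (c i)) (-1 : K), ?_, ?_⟩
    · intro h
      have := congrFun h (Fin.last m)
      simp at this
    · ext i
      simp only [Matrix.mulVec, dotProduct, mooreMatrix, Matrix.of_apply,
        Pi.zero_apply]
      rw [Fin.sum_univ_castSucc]
      simp only [Fin.snoc_castSucc, Fin.snoc_last]
      have hsc : s c ^ p ^ (i : ℕ) = ∑ l, χ (c l) * R l ^ p ^ (i : ℕ) := by
        rw [hs]; exact sum_chi_pow_pow c R (i : ℕ)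
      rw [hsc, mul_neg_one, add_neg_eq_zero]
      exact Finset.sum_congr rfl fun j _ => mul_comm _ _
  -- injectivity of s
  have hsinj : Function.Injective s := by
    intro a b hab
    have h2 : ∑ i, χ ((a - b) i) * R i = 0 := by
      have : s a - s b = 0 := sub_eq_zero.mpr hab
      rw [hs] at this
      simp only at this
      rw [← Finset.sum_sub_distrib] at this
      rw [← this]
      refine Finset.sum_congr rfl fun i _ => ?_
      rw [Pi.sub_apply, map_sub, sub_mul]
    have := hind _ h2
    exact sub_eq_zero.mp (by rwa [sub_eq_zero] at this ⊢) 
  set T : Finset K := Finset.univ.image s with hT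
  have hcardT : T.card = p ^ m := by
    rw [hT, Finset.card_image_of_injective _ hsinj, Finset.card_univ,
      Fintype.card_fun, ZMod.card, Fintype.card_fin]
  -- the product of X - C a over T divides g
  set W : K[X] := (T.val.map fun a => (X : K[X]) - C a).prod with hW
  have hWdvd : W ∣ g := by
    refine (Multiset.prod_dvd_prod_of_le (Multiset.map_le_map ?_)).trans
      g.prod_multiset_X_sub_C_dvd
    rw [Multiset.le_iff_count]
    intro a
    by_cases ha : a ∈ T
    · have h1 : Multiset.count a T.val = 1 := Multiset.count_eq_one_of_mem T.nodup ha
      rw [h1, Polynomial.count_roots]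
      rw [hT] at ha
      obtain ⟨c, _, rfl⟩ := Finset.mem_image.mp ha
      exact (Polynomial.rootMultiplicity_pos hg0).mpr (hroot c)
    · rw [Multiset.count_eq_zero.mpr (fun h => ha h), Polynomial.count_roots]
      exact Nat.zero_le _
  have hWmonic : W.Monic :=
    Polynomial.monic_multiset_prod_of_monic _ _ fun a _ => Polynomial.monic_X_sub_C a
  have hWdeg : W.natDegree = p ^ m := by
    rw [hW, Polynomial.natDegree_multiset_prod_of_monic _
      (fun a ha => by
        obtain ⟨b, _, rfl⟩ := Multiset.mem_map.mp ha
        exact Polynomial.monic_X_sub_C b)]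
    rw [Multiset.map_map]
    have : (T.val.map fun a => ((X : K[X]) - C a).natDegree) = T.val.map fun _ => 1 :=
      Multiset.map_congr rfl fun a _ => Polynomial.natDegree_X_sub_C a
    rw [Function.comp_def, this, Multiset.map_const', Multiset.sum_replicate, smul_eq_mul,
      mul_one, ← Finset.card_def, hcardT]
  -- g = W * C D
  obtain ⟨h, hgh⟩ := hWdvd
  have hh0 : h ≠ 0 := fun hh => hg0 (by rw [hgh, hh, mul_zero])
  have hhdeg : h.natDegree = 0 := by
    have := hgh ▸ hgdeg
    rw [Polynomial.natDegree_mul (hWmonic.ne_zero) hh0, hWdeg] at this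
    omega
  have hhC : h = C D := by
    have h2 : g.leadingCoeff = W.leadingCoeff * h.leadingCoeff := by
      rw [hgh, Polynomial.leadingCoeff_mul]
    rw [hglead, hWmonic.leadingCoeff, one_mul] at h2
    rw [Polynomial.leadingCoeff, hhdeg] at h2
    rw [Polynomial.eq_C_of_natDegree_eq_zero hhdeg, ← h2]
  -- conclude
  have hfinal : (mooreMatrix p (Fin.snoc R y)).det = D * ∏ c : Fin m → ZMod p, (y - s c) := by
    rw [← heval y, hgh, hhC, Polynomial.eval_mul, Polynomial.eval_C, mul_comm]
    congr 1
    rw [hW, Polynomial.eval_multiset_prod, Multiset.map_map]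
    have h3 : (T.val.map fun a => Polynomial.eval y ((X : K[X]) - C a))
        = T.val.map fun a => y - a :=
      Multiset.map_congr rfl fun a _ => by
        rw [Polynomial.eval_sub, Polynomial.eval_X, Polynomial.eval_C]
    rw [Function.comp_def, h3]
    have h4 : (T.val.map fun a => y - a).prod = ∏ a ∈ T, (y - a) := rfl
    rw [h4, hT, Finset.prod_image fun a _ b _ hab => hsinj hab]
  exact hfinal
lemma indep_of_moore_det_ne_zero {K : Type*} [Field K] [CharP K p] {m : ℕ}
    (R : Fin m → K) (h : (mooreMatrix p R).det ≠ 0) :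
    ∀ c : Fin m → ZMod p, ∑ i, ZMod.castHom (dvd_refl p) K (c i) * R i = 0 → c = 0 := by
  intro c hc
  by_contra hc0
  apply h
  rw [← Matrix.exists_mulVec_eq_zero_iff]
  refine ⟨fun j => ZMod.castHom (dvd_refl p) K (c j), ?_, ?_⟩
  · intro h0
    apply hc0
    funext j
    have h1 := congrFun h0 j
    simp only [Pi.zero_apply] at h1
    exact (ZMod.castHom (dvd_refl p) K).injective (by simpa using h1)
  · ext i
    simp only [Matrix.mulVec, dotProduct, mooreMatrix, Matrix.of_apply,
      Pi.zero_apply]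
    have h2 : ∑ j, R j ^ p ^ (i : ℕ) * ZMod.castHom (dvd_refl p) K (c j)
        = (∑ l, ZMod.castHom (dvd_refl p) K (c l) * R l) ^ p ^ (i : ℕ) := by
      rw [sum_chi_pow_pow]
      exact Finset.sum_congr rfl fun j _ => mul_comm _ _
    rw [h2, hc, zero_pow (pow_ne_zero _ (Fact.out : p.Prime).ne_zero)]

lemma moore_det_ne_zero_of_indep {K : Type*} [Field K] [CharP K p] :
    ∀ {m : ℕ} (R : Fin m → K),
      (∀ c : Fin m → ZMod p, ∑ i, ZMod.castHom (dvd_refl p) K (c i) * R i = 0 → c = 0) →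
      (mooreMatrix p R).det ≠ 0 := by
  intro m
  induction m with
  | zero => intro R _; rw [Matrix.det_fin_zero]; exact one_ne_zero
  | succ m ih =>
    intro R hind
    set R0 : Fin m → K := fun i => R i.castSucc with hR0
    have hind0 : ∀ c : Fin m → ZMod p,
        ∑ i, ZMod.castHom (dvd_refl p) K (c i) * R0 i = 0 → c = 0 := by
      intro c hc
      have h1 : ∑ i : Fin (m+1),
          ZMod.castHom (dvd_refl p) K ((Fin.snoc c (0 : ZMod p) : Fin (m+1) → ZMod p) i) * R i = 0 := by
        rw [Fin.sum_univ_castSucc]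
        simp only [Fin.snoc_castSucc, Fin.snoc_last, map_zero, zero_mul, add_zero]
        exact hc
      have h2 := hind _ h1
      funext i
      have h3 := congrFun h2 i.castSucc
      simpa [Fin.snoc_castSucc] using h3
    have hD := ih R0 hind0
    have hsnoc : Fin.snoc R0 (R (Fin.last m)) = R := by
      funext i
      refine Fin.lastCases (by simp) (fun j => by simp [hR0]) i
    have hfact := moore_det_snoc_eq R0 hD hind0 (R (Fin.last m))
    rw [hsnoc] at hfact
    rw [hfact]
    refine mul_ne_zero hD (Finset.prod_ne_zero_iff.mpr fun c _ h0 => ?_)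
    have h1 : ∑ i : Fin (m+1),
        ZMod.castHom (dvd_refl p) K ((Fin.snoc (-c) (1 : ZMod p) : Fin (m+1) → ZMod p) i) * R i = 0 := by
      rw [Fin.sum_univ_castSucc]
      simp only [Fin.snoc_castSucc, Fin.snoc_last, Pi.neg_apply, map_neg, neg_mul,
        _root_.map_one, one_mul]
      rw [Finset.sum_neg_distrib]
      linear_combination h0
    have h2 := hind _ h1
    have h3 := congrFun h2 (Fin.last m)
    simp only [Fin.snoc_last, Pi.zero_apply] at h3
    exact one_ne_zero h3
end Aux

/-- Let `Q₁,…,Q_n` (here `n = n'+1`) be polynomials of common degree `λ ≥ 1` whose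
leading coefficients `q₁,…,q_n` satisfy `Δ_n(q) ≠ 0`.  Put `P = Δ_n(Q)` and, for
`ε ∈ 𝔽_p^n ∖ {0}`, `P_ε = Σᵢ εᵢ(-1)^{i-1} Δ_{n-1}(Q-hatᵢ)`.  Then
`deg P = (1+p+⋯+p^{n-1})λ`, `deg P_ε = (1+p+⋯+p^{n-2})λ`, and `P_ε ∣ P`. -/
theorem moore_det_degree_and_divisibility
    {k : Type*} [Field k] [IsAlgClosed k] (p : ℕ) [Fact p.Prime] [CharP k p]
    (e : ℕ) (n' l : ℕ) (hl : 1 ≤ l)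
    (Q : Fin (n' + 1) → Polynomial k) (q : Fin (n' + 1) → k)
    (hdeg : ∀ i, (Q i).natDegree = l)
    (hlead : ∀ i, (Q i).leadingCoeff = q i)
    (hq : (mooreMatrix p q).det ≠ 0)
    (ε : Fin (n' + 1) → ZMod p) (hε : ε ≠ 0) :
    (mooreMatrix p Q).det.natDegree = (∑ i ∈ Finset.range (n' + 1), p ^ i) * l ∧
    (∑ i, C (ZMod.castHom (dvd_refl p) k (ε i)) * (-1) ^ (i : ℕ) *
        (mooreMatrix p (fun r : Fin n' => Q (Fin.succAbove i r))).det).natDegree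
      = (∑ i ∈ Finset.range n', p ^ i) * l ∧
    (∑ i, C (ZMod.castHom (dvd_refl p) k (ε i)) * (-1) ^ (i : ℕ) *
        (mooreMatrix p (fun r : Fin n' => Q (Fin.succAbove i r))).det)
      ∣ (mooreMatrix p Q).det := by
  classical
  set χk : ZMod p →+* k := ZMod.castHom (dvd_refl p) k with hχk
  set χP : ZMod p →+* k[X] := ZMod.castHom (dvd_refl p) (Polynomial k) with hχP
  have hχPC : ∀ c : ZMod p, χP c = C (χk c) := fun c =>
    RingHom.congr_fun (RingHom.ext_zmod χP ((C : k →+* k[X]).comp χk)) c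
  set Sε : k[X] := ∑ i, C (χk (ε i)) * (-1) ^ (i : ℕ) *
      (mooreMatrix p (fun r : Fin n' => Q (Fin.succAbove i r))).det with hSε
  -- Part 1
  have hpart1 := aux_moore_deg (p := p) Q q hdeg hlead hq
  refine ⟨hpart1.1, ?_⟩
  -- the transformation matrix
  obtain ⟨j0, hj0⟩ : ∃ j, ε j ≠ 0 := Function.ne_iff.mp hε
  set u := ε j0 with hu
  set w : Fin (n' + 1) → ZMod p := fun j => if j = j0 then 0 else ε j * u⁻¹ with hw
  set E : Matrix (Fin (n' + 1)) (Fin (n' + 1)) (ZMod p) :=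
    Matrix.of (fun i j => (if i = j0 then (1 : ZMod p) else 0) * w j) with hE
  set A := (1 : Matrix (Fin (n' + 1)) (Fin (n' + 1)) (ZMod p)) - E with hA
  set B := (1 : Matrix (Fin (n' + 1)) (Fin (n' + 1)) (ZMod p)) + E with hB
  have hEE : E * E = 0 := by
    ext i j
    simp only [Matrix.mul_apply, hE, Matrix.of_apply, Matrix.zero_apply]
    refine Finset.sum_eq_zero fun x _ => ?_
    by_cases hx : x = j0
    · subst hx; simp [hw]
    · simp [hx]
  have hAB : A * B = 1 := by
    rw [hA, hB, sub_mul, one_mul, mul_add, mul_one, hEE, add_zero, add_sub_cancel_right]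
  have hdetA : χk A.det ≠ 0 := by
    have h1 : IsUnit A.det := by
      apply IsUnit.of_mul_eq_one (a := A.det) B.det
      rw [← Matrix.det_mul, hAB, Matrix.det_one]
    intro h
    exact h1.ne_zero (χk.injective (by simpa using h))
  have hcol : ∀ j, (∑ x, ε x * A x j) = if j = j0 then u else 0 := by
    intro j
    have h1 : ∑ x, ε x * A x j = ε j - u * w j := by
      rw [hA]
      simp only [Matrix.sub_apply, Matrix.one_apply, hE, Matrix.of_apply, mul_sub,
        Finset.sum_sub_distrib, mul_ite, mul_one, mul_zero, ite_mul, zero_mul,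
        Finset.sum_ite_eq', Finset.mem_univ, if_true]
      rw [one_mul, hu]
    rw [h1]
    by_cases hj : j = j0
    · subst hj; simp [hw, hu]
    · rw [if_neg hj, hw]
      simp only [if_neg hj]
      rw [mul_comm (ε j) u⁻¹, ← mul_assoc, mul_inv_cancel₀ hj0, one_mul, sub_self]
  -- the transformed tuples
  set Q' : Fin (n' + 1) → k[X] := fun j => ∑ x, χP (A x j) * Q x with hQ'
  set q' : Fin (n' + 1) → k := fun j => ∑ x, χk (A x j) * q x with hq'
  have hmooreQ' : mooreMatrix p Q' = mooreMatrix p Q * A.map χP := moore_mul_matrix Q A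
  have hmooreq' : mooreMatrix p q' = mooreMatrix p q * A.map χk := moore_mul_matrix q A
  have hdetq' : (mooreMatrix p q').det ≠ 0 := by
    rw [hmooreq', Matrix.det_mul, ← RingHom.mapMatrix_apply, ← RingHom.map_det]
    exact mul_ne_zero hq hdetA
  have hq'ne : ∀ j, q' j ≠ 0 := moore_col_ne_zero hdetq'
  have hQcoeff : ∀ i, (Q i).coeff l = q i := by
    intro i
    rw [← hdeg i, Polynomial.coeff_natDegree, hlead i]
  have hQ'coeff : ∀ j, (Q' j).coeff l = q' j := by
    intro j
    rw [hQ', hq', Polynomial.finset_sum_coeff]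
    refine Finset.sum_congr rfl fun i _ => ?_
    rw [hχPC, Polynomial.coeff_C_mul, hQcoeff i]
  have hQ'deg : ∀ j, (Q' j).natDegree = l := by
    intro j
    refine le_antisymm ?_
      (Polynomial.le_natDegree_of_ne_zero (by rw [hQ'coeff j]; exact hq'ne j))
    rw [hQ']
    refine Polynomial.natDegree_sum_le_of_forall_le _ _ fun i _ => ?_
    rw [hχPC]
    exact (Polynomial.natDegree_C_mul_le _ _).trans (le_of_eq (hdeg i))
  have hQ'lead : ∀ j, (Q' j).leadingCoeff = q' j := fun j => by
    rw [Polynomial.leadingCoeff, hQ'deg j, hQ'coeff j]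
  -- the matrix N with first row ε
  set N : Matrix (Fin (n' + 1)) (Fin (n' + 1)) k[X] :=
    Matrix.of (Fin.cons (fun j => C (χk (ε j)))
      (fun (i : Fin n') (j : Fin (n' + 1)) => Q j ^ p ^ (i : ℕ))) with hN
  have hdetN : N.det = Sε := by
    rw [Matrix.det_succ_row_zero, hSε]
    refine Finset.sum_congr rfl fun j _ => ?_
    have h1 : N 0 j = C (χk (ε j)) := by simp [hN]
    have h2 : N.submatrix Fin.succ j.succAbove
        = mooreMatrix p (fun r : Fin n' => Q (j.succAbove r)) := by
      ext a b
      simp [hN, mooreMatrix]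
    rw [h1, h2]
    ring
  -- N * A
  have hrow0 : ∀ j, (N * A.map χP) 0 j = if j = j0 then C (χk u) else 0 := by
    intro j
    rw [Matrix.mul_apply]
    have h1 : ∀ x, N 0 x * (A.map χP) x j = χP (ε x * A x j) := by
      intro x
      have hNx : N 0 x = χP (ε x) := by rw [hχPC]; simp [hN]
      rw [Matrix.map_apply, hNx, ← _root_.map_mul]
    rw [Finset.sum_congr rfl fun x _ => h1 x, ← map_sum, hcol j]
    by_cases hj : j = j0
    · rw [if_pos hj, if_pos hj, hχPC]
    · rw [if_neg hj, if_neg hj, map_zero]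
  have hrows : ∀ (i : Fin n') j, (N * A.map χP) i.succ j = Q' j ^ p ^ (i : ℕ) := by
    intro i j
    rw [Matrix.mul_apply, hQ', sum_chi_pow_pow]
    refine Finset.sum_congr rfl fun x _ => ?_
    rw [Matrix.map_apply]
    have h1 : N i.succ x = Q x ^ p ^ (i : ℕ) := by simp [hN]
    rw [h1, mul_comm]
  set Dhat := (mooreMatrix p (fun r : Fin n' => Q' (j0.succAbove r))).det with hDhat
  have hdetN' : (N * A.map χP).det = (-1) ^ (j0 : ℕ) * C (χk u) * Dhat := by
    rw [Matrix.det_succ_row_zero, Finset.sum_eq_single j0]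
    · have hsub : (N * A.map χP).submatrix Fin.succ j0.succAbove
          = mooreMatrix p (fun r : Fin n' => Q' (j0.succAbove r)) := by
        ext a b
        rw [Matrix.submatrix_apply, hrows]
        rfl
      rw [hrow0 j0, if_pos rfl, hsub, hDhat]
    · intro j _ hj
      rw [hrow0 j, if_neg hj, mul_zero, zero_mul]
    · intro h; exact absurd (Finset.mem_univ _) h
  have hkey : Sε * C (χk A.det) = (-1) ^ (j0 : ℕ) * C (χk u) * Dhat := by
    rw [← hdetN, ← hdetN', Matrix.det_mul]
    congr 1
    rw [← RingHom.mapMatrix_apply, ← RingHom.map_det, hχPC]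
  -- independence of the hatted leading coefficients
  have hindq' := indep_of_moore_det_ne_zero (p := p) q' hdetq'
  have hindq'hat : ∀ c : Fin n' → ZMod p,
      ∑ i, χk (c i) * q' (j0.succAbove i) = 0 → c = 0 := by
    intro c hc
    have h1 : ∑ i, χk ((j0.insertNth (0 : ZMod p) c : Fin (n' + 1) → ZMod p) i) * q' i = 0 := by
      rw [Fin.sum_univ_succAbove _ j0]
      simp only [Fin.insertNth_apply_same, map_zero, zero_mul, zero_add,
        Fin.insertNth_apply_succAbove]
      exact hc
    have h2 := hindq' _ h1
    funext i
    have h3 := congrFun h2 (j0.succAbove i)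
    simpa [Fin.insertNth_apply_succAbove] using h3
  have hdetq'hat : (mooreMatrix p (fun r : Fin n' => q' (j0.succAbove r))).det ≠ 0 :=
    moore_det_ne_zero_of_indep (p := p) _ hindq'hat
  have hDhatdeg := aux_moore_deg (p := p) (fun r : Fin n' => Q' (j0.succAbove r))
      (fun r : Fin n' => q' (j0.succAbove r)) (fun r => hQ'deg _) (fun r => hQ'lead _)
      hdetq'hat
  have hDhat0 : Dhat ≠ 0 := by
    intro h
    apply hdetq'hat
    rw [← hDhatdeg.2, ← hDhat, h, Polynomial.leadingCoeff_zero]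
  -- nonzero constants
  have hCu : ((-1 : k) ^ (j0 : ℕ) * χk u) ≠ 0 :=
    mul_ne_zero (pow_ne_zero _ (neg_ne_zero.mpr one_ne_zero))
      (fun h => hj0 (χk.injective (by simpa using h)))
  have hC2 : ((-1 : k[X]) ^ (j0 : ℕ) * C (χk u)) = C ((-1) ^ (j0 : ℕ) * χk u) := by
    rw [C_mul, C_pow, C_neg, C_1]
  have hSε0 : Sε ≠ 0 := by
    intro h
    rw [h, zero_mul] at hkey
    have h2 : C ((-1 : k) ^ (j0 : ℕ) * χk u) * Dhat = 0 := by rw [← hC2, ← hkey]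
    exact hDhat0 ((mul_eq_zero.mp h2).resolve_left
      (by simpa [Polynomial.C_eq_zero] using hCu))
  have hpart2 : Sε.natDegree = (∑ i ∈ Finset.range n', p ^ i) * l := by
    have e1 : (Sε * C (χk A.det)).natDegree = Sε.natDegree := by
      rw [Polynomial.natDegree_mul hSε0 (by simpa [Polynomial.C_eq_zero] using hdetA),
        Polynomial.natDegree_C, add_zero]
    have e2 : ((-1 : k[X]) ^ (j0 : ℕ) * C (χk u) * Dhat).natDegree = Dhat.natDegree := by
      rw [hC2, Polynomial.natDegree_mul (by simpa [Polynomial.C_eq_zero] using hCu) hDhat0,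
        Polynomial.natDegree_C, zero_add]
    rw [← e1, hkey, e2, hDhatdeg.1]
  refine ⟨hpart2, ?_⟩
  -- Part 3
  set f : Fin (n' + 1) → Fin (n' + 1) :=
    Fin.snoc (fun r : Fin n' => j0.succAbove r) j0 with hf
  have hfinj : Function.Injective f := by
    intro a b
    refine Fin.lastCases ?_ ?_ a
    · refine Fin.lastCases ?_ ?_ b
      · intro _; rfl
      · intro b' hab
        rw [hf] at hab
        simp only [Fin.snoc_castSucc, Fin.snoc_last] at hab
        exact absurd hab.symm (Fin.succAbove_ne j0 b')
    · intro a'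
      refine Fin.lastCases ?_ ?_ b
      · intro hab
        rw [hf] at hab
        simp only [Fin.snoc_castSucc, Fin.snoc_last] at hab
        exact absurd hab (Fin.succAbove_ne j0 a')
      · intro b' hab
        rw [hf] at hab
        simp only [Fin.snoc_castSucc] at hab
        rw [Fin.succAbove_right_injective.eq_iff] at hab
        rw [hab]
  set σ : Equiv.Perm (Fin (n' + 1)) :=
    Equiv.ofBijective f (Finite.injective_iff_bijective.mp hfinj) with hσ
  set Tt : Fin (n' + 1) → k[X] :=
    Fin.snoc (fun r : Fin n' => Q' (j0.succAbove r)) (Q' j0) with hTt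
  have hTQ : Tt = fun i => Q' (σ i) := by
    funext i
    have hσf : σ i = f i := rfl
    rw [hσf, hTt, hf]
    refine Fin.lastCases ?_ (fun i' => ?_) i
    · simp only [Fin.snoc_last]
    · simp only [Fin.snoc_castSucc]
  have hmooreT : mooreMatrix p Tt = (mooreMatrix p Q').submatrix id σ := by
    ext i j
    simp [hTQ, mooreMatrix, Matrix.submatrix_apply]
  have hdetT : (mooreMatrix p Tt).det = (Equiv.Perm.sign σ : ℤ) * (mooreMatrix p Q').det := by
    rw [hmooreT, Matrix.det_permute']
  -- fraction field
  set K := FractionRing (Polynomial k) with hK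
  have hφinj : Function.Injective (algebraMap (Polynomial k) K) :=
    IsFractionRing.injective (Polynomial k) K
  haveI : CharP K p := charP_of_injective_ringHom hφinj p
  set φ : Polynomial k →+* K := algebraMap (Polynomial k) K with hφ
  set χK : ZMod p →+* K := ZMod.castHom (dvd_refl p) K with hχK
  have hχKφ : ∀ c, χK c = φ (χP c) := fun c =>
    RingHom.congr_fun (RingHom.ext_zmod χK (φ.comp χP)) c
  have hmapdet : ∀ {m : ℕ} (S : Fin m → Polynomial k),
      (mooreMatrix p (fun i => φ (S i))).det = φ (mooreMatrix p S).det := by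
    intro m S
    rw [RingHom.map_det]
    congr 1
    ext i j
    simp [mooreMatrix, RingHom.mapMatrix_apply, map_pow]
  have hDK : (mooreMatrix p (fun r : Fin n' => φ (Q' (j0.succAbove r)))).det ≠ 0 := by
    rw [hmapdet]
    intro h
    exact hDhat0 (hφinj (h.trans (map_zero φ).symm))
  have hindK : ∀ c : Fin n' → ZMod p,
      ∑ i, χK (c i) * φ (Q' (j0.succAbove i)) = 0 → c = 0 := by
    intro c hc
    have h1 : φ (∑ i, χP (c i) * Q' (j0.succAbove i)) = 0 := by
      rw [map_sum, ← hc]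
      exact Finset.sum_congr rfl fun i _ => by rw [_root_.map_mul, hχKφ]
    have h2 : ∑ i, χP (c i) * Q' (j0.succAbove i) = 0 :=
      hφinj (h1.trans (map_zero φ).symm)
    apply hindq'hat c
    have h4 : ∑ i, χk (c i) * q' (j0.succAbove i)
        = (∑ i, χP (c i) * Q' (j0.succAbove i)).coeff l := by
      rw [Polynomial.finset_sum_coeff]
      refine Finset.sum_congr rfl fun i _ => ?_
      rw [hχPC, Polynomial.coeff_C_mul]
      congr 1
      rw [← hQ'deg (j0.succAbove i), Polynomial.coeff_natDegree, hQ'lead]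
    rw [h4, h2, Polynomial.coeff_zero]
  have hfact := moore_det_snoc_eq (p := p) (K := K)
    (fun r : Fin n' => φ (Q' (j0.succAbove r))) hDK hindK (φ (Q' j0))
  have hsnocmap : (fun i => φ (Tt i))
      = Fin.snoc (fun r : Fin n' => φ (Q' (j0.succAbove r))) (φ (Q' j0)) := by
    funext i
    refine Fin.lastCases ?_ (fun i' => ?_) i
    · simp only [hTt, Fin.snoc_last]
    · simp only [hTt, Fin.snoc_castSucc]
  have hRHS : (mooreMatrix p (fun r : Fin n' => φ (Q' (j0.succAbove r)))).det *
      ∏ c : Fin n' → ZMod p, (φ (Q' j0) - ∑ i, χK (c i) * φ (Q' (j0.succAbove i)))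
      = φ (Dhat * ∏ c : Fin n' → ZMod p,
          (Q' j0 - ∑ i, χP (c i) * Q' (j0.succAbove i))) := by
    rw [_root_.map_mul, hmapdet, hDhat]
    congr 1
    rw [map_prod]
    refine Finset.prod_congr rfl fun c _ => ?_
    rw [map_sub]
    congr 1
    rw [map_sum]
    exact Finset.sum_congr rfl fun i _ => by rw [_root_.map_mul, hχKφ]
  have hTt_eq : (mooreMatrix p Tt).det
      = Dhat * ∏ c : Fin n' → ZMod p,
          (Q' j0 - ∑ i, χP (c i) * Q' (j0.succAbove i)) := by
    apply hφinj
    rw [← hmapdet Tt, hsnocmap, hfact]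
    exact hRHS
  have hdvdT : Dhat ∣ (mooreMatrix p Tt).det := ⟨_, hTt_eq⟩
  have hdvd1 : Dhat ∣ (mooreMatrix p Q').det := by
    rcases Int.units_eq_one_or (Equiv.Perm.sign σ) with hs | hs
    · rw [hs] at hdetT
      have h2 : (mooreMatrix p Q').det = (mooreMatrix p Tt).det := by
        rw [hdetT]; push_cast; ring
      rw [h2]
      exact hdvdT
    · rw [hs] at hdetT
      have h2 : (mooreMatrix p Q').det = -(mooreMatrix p Tt).det := by
        rw [hdetT]; push_cast; ring
      rw [h2]
      exact hdvdT.neg_right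
  have hdvd2 : Dhat ∣ (mooreMatrix p Q).det := by
    have h1 : (mooreMatrix p Q').det = (mooreMatrix p Q).det * C (χk A.det) := by
      rw [hmooreQ', Matrix.det_mul]
      congr 1
      rw [← RingHom.mapMatrix_apply, ← RingHom.map_det, hχPC]
    have h2 : (mooreMatrix p Q).det = (mooreMatrix p Q').det * C ((χk A.det)⁻¹) := by
      rw [h1, mul_assoc, ← C_mul, mul_inv_cancel₀ hdetA, C_1, mul_one]
    rw [h2]
    exact hdvd1.mul_right _
  have hee : ((-1 : k) ^ (j0 : ℕ) * χk u * (χk A.det)⁻¹) ≠ 0 :=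
    mul_ne_zero hCu (inv_ne_zero hdetA)
  have hSεD : Sε = Dhat * C ((-1) ^ (j0 : ℕ) * χk u * (χk A.det)⁻¹) := by
    have h1 : Sε = Sε * C (χk A.det) * C ((χk A.det)⁻¹) := by
      rw [mul_assoc, ← C_mul, mul_inv_cancel₀ hdetA, C_1, mul_one]
    rw [h1, hkey, hC2, mul_comm (C ((-1) ^ (j0 : ℕ) * χk u)) Dhat, mul_assoc, ← C_mul]
  obtain ⟨Wq, hWq⟩ := hdvd2
  refine ⟨C (((-1 : k) ^ (j0 : ℕ) * χk u * (χk A.det)⁻¹)⁻¹) * Wq, ?_⟩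
  rw [hWq, hSεD, mul_assoc, ← mul_assoc (C ((-1 : k) ^ (j0 : ℕ) * χk u * (χk A.det)⁻¹)),
    ← C_mul, mul_inv_cancel₀ hee, C_1, one_mul]
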